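/- Let n_1, …, n_K be integers with each n_j > 2, and let sign_j ∈ {+1, −1} be such that Σ_{j=1}^K sign_j·log N(n_j) = 0 and the relation is non-degenerate, i.e. there is no proper nonempty subset S ⊂ {1, …, K} with Σ_{j∈S} sign_j·log N(n_j) = 0. Then all the numbers n_j² − 4 have the same squarefree kernel: there exist an integer d and positive integers f_1, …, f_K such that n_j² − 4 = d·f_j² for every j (so all the units N(n_j) lie in the same real quadratic field ℚ(√d)). -/

import Mathlib

/-- `N(n) = ((n + √(n²−4))/2)²`, the norm of a hyperbolic class of trace `n`. -/
noncomputable def Nnorm (n : ℕ) : ℝ := (((n : ℝ) + Real.sqrt ((n : ℝ) ^ 2 - 4)) / 2) ^ 2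

open Real

noncomputable section

/-- The subalgebra of ℝ generated over ℚ by the square roots of the elements of `P`. -/
def FF (P : Finset ℕ) : Subalgebra ℚ ℝ :=
  Algebra.adjoin ℚ ((fun p : ℕ => Real.sqrt p) '' ↑P)

lemma sqrt_nat_isIntegral (p : ℕ) : IsIntegral ℚ (Real.sqrt p) := by
  refine ⟨Polynomial.X ^ 2 - Polynomial.C (p : ℚ), Polynomial.monic_X_pow_sub_C _ (by norm_num), ?_⟩
  simp [Real.sq_sqrt (by positivity : (0:ℝ) ≤ (p:ℝ))]

lemma FF_le_integralClosure (P : Finset ℕ) : FF P ≤ integralClosure ℚ ℝ := by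
  apply Algebra.adjoin_le
  rintro x ⟨p, -, rfl⟩
  exact sqrt_nat_isIntegral p

lemma FF_isAlgebraic {P : Finset ℕ} {x : ℝ} (hx : x ∈ FF P) : IsAlgebraic ℚ x :=
  (FF_le_integralClosure P hx).isAlgebraic

lemma FF_inv {P : Finset ℕ} {x : ℝ} (hx : x ∈ FF P) : x⁻¹ ∈ FF P :=
  (FF P).inv_mem_of_algebraic (x := ⟨x, hx⟩) (FF_isAlgebraic hx)

lemma FF_mono {P Q : Finset ℕ} (h : P ⊆ Q) : FF P ≤ FF Q :=
  Algebra.adjoin_mono (Set.image_mono (by exact_mod_cast h))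

lemma sqrt_mem_FF {P : Finset ℕ} {p : ℕ} (hp : p ∈ P) : Real.sqrt p ∈ FF P :=
  Algebra.subset_adjoin ⟨p, by simpa using hp, rfl⟩

lemma mem_FF_insert {q : ℕ} {P : Finset ℕ} {x : ℝ} :
    x ∈ FF (insert q P) ↔ ∃ a b, a ∈ FF P ∧ b ∈ FF P ∧ x = a + b * Real.sqrt q := by
  constructor
  · intro hx
    have himg : ((fun p : ℕ => Real.sqrt p) '' ↑(insert q P))
        = insert (Real.sqrt q) ((fun p : ℕ => Real.sqrt p) '' ↑P) := by
      rw [Finset.coe_insert, Set.image_insert_eq]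
    rw [FF, himg] at hx
    induction hx using Algebra.adjoin_induction with
    | mem y hy =>
      rcases hy with rfl | hy
      · exact ⟨0, 1, zero_mem _, one_mem _, by ring⟩
      · exact ⟨y, 0, Algebra.subset_adjoin hy, zero_mem _, by ring⟩
    | algebraMap r => exact ⟨algebraMap ℚ ℝ r, 0, algebraMap_mem _ r, zero_mem _, by ring⟩
    | add x y hx hy ihx ihy =>
      obtain ⟨a, b, ha, hb, rfl⟩ := ihx
      obtain ⟨c, d, hc, hd, rfl⟩ := ihy
      exact ⟨a + c, b + d, add_mem ha hc, add_mem hb hd, by ring⟩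
    | mul x y hx hy ihx ihy =>
      obtain ⟨a, b, ha, hb, rfl⟩ := ihx
      obtain ⟨c, d, hc, hd, rfl⟩ := ihy
      refine ⟨a * c + b * d * q, a * d + b * c, ?_, ?_, ?_⟩
      · exact add_mem (mul_mem ha hc) (mul_mem (mul_mem hb hd) (natCast_mem _ q))
      · exact add_mem (mul_mem ha hd) (mul_mem hb hc)
      · have : Real.sqrt q * Real.sqrt q = (q : ℝ) :=
          Real.mul_self_sqrt (by positivity)
        rw [add_mul, mul_add, mul_add,
          show b * Real.sqrt ↑q * (d * Real.sqrt ↑q) = b * d * (Real.sqrt q * Real.sqrt q) by ring,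
          this]
        ring
  · rintro ⟨a, b, ha, hb, rfl⟩
    have h1 : a ∈ FF (insert q P) := FF_mono (Finset.subset_insert q P) ha
    have h2 : b ∈ FF (insert q P) := FF_mono (Finset.subset_insert q P) hb
    exact add_mem h1 (mul_mem h2 (sqrt_mem_FF (Finset.mem_insert_self q P)))

lemma squarefree_eq_one_of_isSquare {m : ℕ} (hm : Squarefree m) (h : IsSquare m) : m = 1 := by
  obtain ⟨k, rfl⟩ := h
  have := hm k (dvd_refl _)
  simp [Nat.isUnit_iff.mp this]

/-- Main lemma: if `√n ∈ FF P` with `n` squarefree and `P` a set of primes, then `n ∣ ∏ P`. -/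
lemma dvd_prod_of_sqrt_mem :
    ∀ (P : Finset ℕ), (∀ p ∈ P, p.Prime) → ∀ n : ℕ, Squarefree n →
      Real.sqrt n ∈ FF P → n ∣ ∏ p ∈ P, p := by
  intro P
  induction P using Finset.induction_on with
  | empty =>
    intro _ n hn hmem
    rw [FF] at hmem
    simp only [Finset.coe_empty, Set.image_empty, Algebra.adjoin_empty, Algebra.mem_bot] at hmem
    obtain ⟨r, hr⟩ := hmem
    have : ¬ Irrational (Real.sqrt n) := by
      rw [← hr, eq_ratCast (algebraMap ℚ ℝ) r]
      exact Rat.not_irrational r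
    rw [irrational_sqrt_natCast_iff, not_not] at this
    simp [squarefree_eq_one_of_isSquare hn this]
  | @insert q Q hqQ ih =>
    intro hprimes n hn hmem
    have hq : q.Prime := hprimes q (Finset.mem_insert_self q Q)
    have hQ : ∀ p ∈ Q, p.Prime := fun p hp => hprimes p (Finset.mem_insert_of_mem hp)
    have hq0 : (0:ℝ) < (q:ℝ) := by exact_mod_cast hq.pos
    have hsq : Real.sqrt q ∉ FF Q := by
      intro h
      have := ih hQ q hq.squarefree h
      obtain ⟨p, hp, hqp⟩ := hq.prime.exists_mem_finset_dvd this
      exact hqQ ((Nat.prime_dvd_prime_iff_eq hq (hQ p hp)).mp hqp ▸ hp)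
    obtain ⟨a, b, ha, hb, hab⟩ := mem_FF_insert.mp hmem
    have hsqq : Real.sqrt q * Real.sqrt q = (q:ℝ) := Real.mul_self_sqrt (le_of_lt hq0)
    have hnn : (Real.sqrt n) * (Real.sqrt n) = (n:ℝ) := Real.mul_self_sqrt (by positivity)
    have key : (2 * a * b) * Real.sqrt q = (n:ℝ) - a^2 - q * b^2 := by
      have : ((n:ℝ)) = a^2 + q * b^2 + (2*a*b) * Real.sqrt q := by
        rw [← hnn, hab]
        rw [show (a + b * Real.sqrt q) * (a + b * Real.sqrt q)
            = a^2 + b^2 * (Real.sqrt q * Real.sqrt q) + (2*a*b) * Real.sqrt q by ring, hsqq]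
        ring
      linarith
    by_cases hb0 : b = 0
    · subst hb0
      rw [zero_mul, add_zero] at hab
      have := ih hQ n hn (hab ▸ ha)
      rw [Finset.prod_insert hqQ]
      exact this.mul_left q
    by_cases ha0 : a = 0
    · subst ha0
      rw [zero_add] at hab
      by_cases hqn : q ∣ n
      · -- n = q * m
        obtain ⟨m, rfl⟩ := hqn
        have hm : Squarefree m := hn.squarefree_of_dvd ⟨q, mul_comm q m⟩
        have hsplit : Real.sqrt (q * m : ℕ) = Real.sqrt q * Real.sqrt m := by
          push_cast; exact Real.sqrt_mul (le_of_lt hq0) m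
        have hbm : Real.sqrt m = b := by
          have h1 : Real.sqrt q * Real.sqrt m = Real.sqrt q * b := by
            rw [← hsplit, hab, mul_comm]
          exact mul_left_cancel₀ (by positivity) h1
        have := ih hQ m hm (hbm ▸ hb)
        rw [Finset.prod_insert hqQ]
        exact mul_dvd_mul_left q this
      · -- q ∤ n : then √(n q) = b * q ∈ FF Q, n*q squarefree, contradiction
        have hnq : Squarefree (n * q) := by
          rw [Nat.squarefree_mul_iff]
          exact ⟨((Nat.Prime.coprime_iff_not_dvd hq).mpr hqn).symm, hn, hq.squarefree⟩
        have hmem2 : Real.sqrt (n * q : ℕ) ∈ FF Q := by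
          have : Real.sqrt (n * q : ℕ) = b * q := by
            push_cast
            rw [Real.sqrt_mul (by positivity) (q:ℝ), hab,
              mul_assoc, hsqq]
          rw [this]
          exact mul_mem hb (natCast_mem _ q)
        have hdvd := ih hQ (n * q) hnq hmem2
        exfalso
        have hqdvd : q ∣ ∏ p ∈ Q, p := dvd_trans (Dvd.intro_left n rfl) hdvd
        obtain ⟨p, hp, hqp⟩ := hq.prime.exists_mem_finset_dvd hqdvd
        exact hqQ ((Nat.prime_dvd_prime_iff_eq hq (hQ p hp)).mp hqp ▸ hp)
    · -- a ≠ 0, b ≠ 0 : √q ∈ FF Q, contradiction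
      exfalso
      apply hsq
      have h2ab : (2 * a * b) ≠ 0 := by
        intro h; rcases mul_eq_zero.mp h with h' | h'
        · rcases mul_eq_zero.mp h' with h'' | h''
          · norm_num at h''
          · exact ha0 h''
        · exact hb0 h'
      have : Real.sqrt q = ((n:ℝ) - a^2 - q * b^2) * (2*a*b)⁻¹ := by
        field_simp at key ⊢
        linarith [key]
      rw [this]
      refine mul_mem ?_ (FF_inv ?_)
      · refine sub_mem (sub_mem (natCast_mem _ n) (pow_mem ha 2)) ?_
        exact mul_mem (natCast_mem _ q) (pow_mem hb 2)
      · exact mul_mem (mul_mem (by exact_mod_cast (FF Q).natCast_mem 2 : (2:ℝ) ∈ FF Q) ha) hb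

lemma FF_unique {Q : Finset ℕ} {q : ℕ} (hsq : Real.sqrt q ∉ FF Q)
    {a b a' b' : ℝ} (ha : a ∈ FF Q) (hb : b ∈ FF Q) (ha' : a' ∈ FF Q) (hb' : b' ∈ FF Q)
    (h : a + b * Real.sqrt q = a' + b' * Real.sqrt q) : a = a' ∧ b = b' := by
  by_cases hbb : b = b'
  · subst hbb
    exact ⟨by linarith, rfl⟩
  · exfalso
    apply hsq
    have hne : b' - b ≠ 0 := fun hc => hbb (by linarith)
    have : Real.sqrt q = (a - a') * (b' - b)⁻¹ := by
      field_simp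
      linarith
    rw [this]
    exact mul_mem (sub_mem ha ha') (FF_inv (sub_mem hb' hb))

/-- Decomposition predicate. -/
def HasDec (Q : Finset ℕ) (q : ℕ) (x : ℝ) : Prop :=
  ∃ a, a ∈ FF Q ∧ ∃ b, b ∈ FF Q ∧ x = a + b * Real.sqrt q

open Classical in
/-- The conjugation map sending `a + b √q ↦ a − b √q`. -/
def conjFF (Q : Finset ℕ) (q : ℕ) (x : ℝ) : ℝ :=
  if h : HasDec Q q x then
    h.choose - h.choose_spec.2.choose * Real.sqrt q
  else 0

lemma conjFF_eq {Q : Finset ℕ} {q : ℕ} (hsq : Real.sqrt q ∉ FF Q)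
    {a b : ℝ} (ha : a ∈ FF Q) (hb : b ∈ FF Q) :
    conjFF Q q (a + b * Real.sqrt q) = a - b * Real.sqrt q := by
  have h : HasDec Q q (a + b * Real.sqrt q) := ⟨a, ha, b, hb, rfl⟩
  rw [conjFF, dif_pos h]
  have h1 := h.choose_spec.1
  have h2 := h.choose_spec.2.choose_spec.1
  have h3 := h.choose_spec.2.choose_spec.2
  obtain ⟨e1, e2⟩ := FF_unique hsq h1 h2 ha hb h3.symm
  linear_combination e1 - Real.sqrt q * e2

lemma mem_FF_insert_iff_hasDec {q : ℕ} {Q : Finset ℕ} {x : ℝ} :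
    x ∈ FF (insert q Q) ↔ HasDec Q q x := by
  rw [mem_FF_insert]
  constructor
  · rintro ⟨a, b, ha, hb, rfl⟩; exact ⟨a, ha, b, hb, rfl⟩
  · rintro ⟨a, ha, b, hb, rfl⟩; exact ⟨a, b, ha, hb, rfl⟩

lemma conjFF_fix {Q : Finset ℕ} {q : ℕ} (hsq : Real.sqrt q ∉ FF Q)
    {x : ℝ} (hx : x ∈ FF Q) : conjFF Q q x = x := by
  have := conjFF_eq hsq hx (zero_mem (FF Q)) (b := 0)
  simpa using this

lemma conjFF_one {Q : Finset ℕ} {q : ℕ} (hsq : Real.sqrt q ∉ FF Q) : conjFF Q q 1 = 1 :=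
  conjFF_fix hsq (one_mem _)

lemma conjFF_mul {Q : Finset ℕ} {q : ℕ} (hsq : Real.sqrt q ∉ FF Q)
    {x y : ℝ} (hx : x ∈ FF (insert q Q)) (hy : y ∈ FF (insert q Q)) :
    conjFF Q q (x * y) = conjFF Q q x * conjFF Q q y := by
  obtain ⟨a, b, ha, hb, rfl⟩ := mem_FF_insert.mp hx
  obtain ⟨c, d, hc, hd, rfl⟩ := mem_FF_insert.mp hy
  have hq0 : (0:ℝ) ≤ (q:ℝ) := by positivity
  have hsqq : Real.sqrt q * Real.sqrt q = (q:ℝ) := Real.mul_self_sqrt hq0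
  have hprod : (a + b * Real.sqrt q) * (c + d * Real.sqrt q)
      = (a * c + b * d * q) + (a * d + b * c) * Real.sqrt q := by
    rw [add_mul, mul_add, mul_add,
      show b * Real.sqrt ↑q * (d * Real.sqrt ↑q) = b * d * (Real.sqrt q * Real.sqrt q) by ring,
      hsqq]
    ring
  have hm1 : a * c + b * d * q ∈ FF Q :=
    add_mem (mul_mem ha hc) (mul_mem (mul_mem hb hd) (natCast_mem _ q))
  have hm2 : a * d + b * c ∈ FF Q := add_mem (mul_mem ha hd) (mul_mem hb hc)
  rw [hprod, conjFF_eq hsq hm1 hm2, conjFF_eq hsq ha hb, conjFF_eq hsq hc hd]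
  rw [sub_mul, mul_sub, mul_sub,
    show b * Real.sqrt ↑q * (d * Real.sqrt ↑q) = b * d * (Real.sqrt q * Real.sqrt q) by ring,
    hsqq]
  ring

lemma conjFF_prod {ι : Type*} {Q : Finset ℕ} {q : ℕ} (hsq : Real.sqrt q ∉ FF Q)
    (t : Finset ι) (g : ι → ℝ) (hg : ∀ i ∈ t, g i ∈ FF (insert q Q)) :
    conjFF Q q (∏ i ∈ t, g i) = ∏ i ∈ t, conjFF Q q (g i) := by
  classical
  induction t using Finset.induction_on with
  | empty => simp [conjFF_one hsq]
  | @insert i t hit ih =>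
    rw [Finset.prod_insert hit, Finset.prod_insert hit,
      conjFF_mul hsq (hg i (Finset.mem_insert_self i t))
        (prod_mem fun j hj => hg j (Finset.mem_insert_of_mem hj)),
      ih fun j hj => hg j (Finset.mem_insert_of_mem hj)]

lemma sqrt_squarefree_mem {d : ℕ} (hd : Squarefree d) {S : Finset ℕ}
    (hsub : d.primeFactors ⊆ S) : Real.sqrt d ∈ FF S := by
  have hprod : (∏ p ∈ d.primeFactors, Real.sqrt p) = Real.sqrt d := by
    rw [eq_comm, Real.sqrt_eq_cases]
    left
    constructor
    · rw [← Finset.prod_mul_distrib]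
      have : ∀ p ∈ d.primeFactors, Real.sqrt p * Real.sqrt p = (p:ℝ) := fun p _ =>
        Real.mul_self_sqrt (by positivity)
      rw [Finset.prod_congr rfl this]
      rw [← Nat.cast_prod, Nat.prod_primeFactors_of_squarefree hd]
    · exact Finset.prod_nonneg fun p _ => Real.sqrt_nonneg _
  rw [← hprod]
  exact prod_mem fun p hp => sqrt_mem_FF (hsub hp)

lemma sqrt_prime_not_mem_FF {q : ℕ} {Q : Finset ℕ} (hq : q.Prime)
    (hQ : ∀ p ∈ Q, p.Prime) (hqQ : q ∉ Q) : Real.sqrt q ∉ FF Q := by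
  intro h
  have := dvd_prod_of_sqrt_mem Q hQ q hq.squarefree h
  obtain ⟨p, hp, hqp⟩ := hq.prime.exists_mem_finset_dvd this
  exact hqQ ((Nat.prime_dvd_prime_iff_eq hq (hQ p hp)).mp hqp ▸ hp)

lemma half_mem {Q : Finset ℕ} {x : ℝ} (hx : x ∈ FF Q) : x / 2 ∈ FF Q := by
  rw [div_eq_mul_inv]
  exact mul_mem hx (FF_inv (by exact_mod_cast natCast_mem (FF Q) 2))

/-- `λ(n) = (n + √(n²−4))/2`. -/
def lamf (nn : ℕ) : ℝ := ((nn : ℝ) + Real.sqrt ((nn ^ 2 - 4 : ℕ))) / 2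

open Classical in
def nuf (s : ℝ) (nn : ℕ) : ℝ := if s = 1 then lamf nn else (lamf nn)⁻¹

section lam
variable {nn : ℕ} (h : 2 < nn)
include h

lemma mcast : ((nn ^ 2 - 4 : ℕ) : ℝ) = (nn : ℝ) ^ 2 - 4 := by
  have h4 : 4 ≤ nn ^ 2 := by nlinarith
  rw [Nat.cast_sub h4]
  push_cast
  ring

lemma one_lt_lamf : 1 < lamf nn := by
  have h3 : (3 : ℝ) ≤ (nn : ℝ) := by exact_mod_cast h
  have := Real.sqrt_nonneg ((nn ^ 2 - 4 : ℕ) : ℝ)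
  rw [lamf]
  linarith

lemma lamf_pos : 0 < lamf nn := lt_trans one_pos (one_lt_lamf h)

lemma lamf_mul_conj :
    lamf nn * (((nn : ℝ) - Real.sqrt ((nn ^ 2 - 4 : ℕ))) / 2) = 1 := by
  have h1 : Real.sqrt ((nn ^ 2 - 4 : ℕ)) * Real.sqrt ((nn ^ 2 - 4 : ℕ))
      = ((nn ^ 2 - 4 : ℕ) : ℝ) := Real.mul_self_sqrt (by positivity)
  rw [lamf]
  nlinarith [h1, mcast h]

lemma lamf_inv : (lamf nn)⁻¹ = ((nn : ℝ) - Real.sqrt ((nn ^ 2 - 4 : ℕ))) / 2 :=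
  inv_eq_of_mul_eq_one_right (lamf_mul_conj h)

lemma Nnorm_eq_lamf_sq : Nnorm nn = (lamf nn) ^ 2 := by
  rw [Nnorm, lamf, mcast h]

lemma log_Nnorm : Real.log (Nnorm nn) = 2 * Real.log (lamf nn) := by
  rw [Nnorm_eq_lamf_sq h, Real.log_pow]
  push_cast
  ring

lemma nuf_pos (s : ℝ) : 0 < nuf s nn := by
  rw [nuf]
  split
  · exact lamf_pos h
  · exact inv_pos.mpr (lamf_pos h)

omit h in
lemma log_nuf {s : ℝ} (hs : s = 1 ∨ s = -1) :
    Real.log (nuf s nn) = s * Real.log (lamf nn) := by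
  rcases hs with hs | hs <;> subst hs
  · rw [nuf, if_pos rfl, one_mul]
  · rw [nuf, if_neg (by norm_num), Real.log_inv]
    ring

end lam

/-- **Lemma 2 (`lem:Indep`)**: if `Σ_j sign_j·log N(n_j) = 0` is a non-degenerate relation
(no proper nonempty subsum vanishes), then all the `n_j² − 4` have the same squarefree
kernel: there are an integer `d` and positive integers `f_j` with `n_j² − 4 = d·f_j²`. -/
theorem nondegenerate_relation_same_field
    (K : ℕ) (n : Fin K → ℕ) (hn : ∀ j, 2 < n j)
    (sign : Fin K → ℝ) (hsign : ∀ j, sign j = 1 ∨ sign j = -1)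
    (hrel : ∑ j, sign j * Real.log (Nnorm (n j)) = 0)
    (hnondeg : ∀ S : Finset (Fin K), S.Nonempty → S ≠ Finset.univ →
      ∑ j ∈ S, sign j * Real.log (Nnorm (n j)) ≠ 0) :
    ∃ d : ℤ, ∃ f : Fin K → ℤ, ∀ j, 0 < f j ∧ (n j : ℤ) ^ 2 - 4 = d * f j ^ 2 := by
  classical
  have hmpos : ∀ j, 0 < (n j) ^ 2 - 4 := fun j => by
    have h3 : 3 ≤ n j := hn j
    have : 9 ≤ (n j) ^ 2 := by nlinarith
    omega
  -- squarefree decomposition  (f j)² * d j = n j² − 4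
  choose d f hd0 hf0 hdf hsf using fun j => Nat.sq_mul_squarefree_of_pos (hmpos j)
  -- the units ν j = λ j ^ (sign j)
  have hνpos : ∀ j, 0 < nuf (sign j) (n j) := fun j => nuf_pos (hn j) _
  have hνlog : ∀ j, Real.log (nuf (sign j) (n j)) = sign j * Real.log (lamf (n j)) :=
    fun j => log_nuf (hsign j)
  have hprod : ∏ j, nuf (sign j) (n j) = 1 := by
    have hlp : Real.log (∏ j, nuf (sign j) (n j)) = 0 := by
      rw [Real.log_prod (fun j _ => (hνpos j).ne')]
      have : ∑ j, Real.log (nuf (sign j) (n j))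
          = (1/2) * ∑ j, sign j * Real.log (Nnorm (n j)) := by
        rw [Finset.mul_sum]
        refine Finset.sum_congr rfl fun j _ => ?_
        rw [hνlog j, log_Nnorm (hn j)]
        ring
      rw [this, hrel, mul_zero]
    have hppos : 0 < ∏ j, nuf (sign j) (n j) := Finset.prod_pos fun j _ => hνpos j
    rcases Real.log_eq_zero.mp hlp with h | h | h
    · exact absurd h hppos.ne'
    · exact h
    · linarith
  -- all the squarefree kernels coincide
  have hdeq : ∀ j k, d j = d k := by
    by_contra hcon
    push_neg at hcon
    obtain ⟨j0, j1, hne⟩ := hcon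
    -- find a prime dividing one kernel but not another
    have hqex : ∃ q, q.Prime ∧ ∃ ja jb : Fin K, q ∣ d ja ∧ ¬ q ∣ d jb := by
      have hpfne : (d j0).primeFactors ≠ (d j1).primeFactors := by
        intro h
        apply hne
        rw [← Nat.prod_primeFactors_of_squarefree (hsf j0),
          ← Nat.prod_primeFactors_of_squarefree (hsf j1), h]
      by_cases hss : (d j0).primeFactors ⊆ (d j1).primeFactors
      · obtain ⟨q, hq1, hq0⟩ := Finset.exists_of_ssubset (ssubset_of_subset_of_ne hss hpfne)
        refine ⟨q, Nat.prime_of_mem_primeFactors hq1, j1, j0,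
          Nat.dvd_of_mem_primeFactors hq1, fun hdvd => hq0 ?_⟩
        exact Nat.mem_primeFactors.mpr
          ⟨Nat.prime_of_mem_primeFactors hq1, hdvd, (hd0 j0).ne'⟩
      · obtain ⟨q, hq0, hq1⟩ := Finset.not_subset.mp hss
        refine ⟨q, Nat.prime_of_mem_primeFactors hq0, j0, j1,
          Nat.dvd_of_mem_primeFactors hq0, fun hdvd => hq1 ?_⟩
        exact Nat.mem_primeFactors.mpr
          ⟨Nat.prime_of_mem_primeFactors hq0, hdvd, (hd0 j1).ne'⟩
    obtain ⟨q, hqprime, ja, jb, hqa, hqb⟩ := hqex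
    -- the relevant finite sets of primes
    set R : Finset ℕ := Finset.univ.biUnion (fun j => (d j).primeFactors) with hR
    have hRprime : ∀ p ∈ R, p.Prime := by
      intro p hp
      rw [hR, Finset.mem_biUnion] at hp
      obtain ⟨j, -, hj⟩ := hp
      exact Nat.prime_of_mem_primeFactors hj
    have hqR : q ∈ R := Finset.mem_biUnion.mpr
      ⟨ja, Finset.mem_univ _, Nat.mem_primeFactors.mpr ⟨hqprime, hqa, (hd0 ja).ne'⟩⟩
    set Q := R.erase q with hQdef
    have hQprime : ∀ p ∈ Q, p.Prime := fun p hp => hRprime p (Finset.mem_of_mem_erase hp)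
    have hqQ : q ∉ Q := Finset.notMem_erase q R
    have hsq : Real.sqrt q ∉ FF Q := sqrt_prime_not_mem_FF hqprime hQprime hqQ
    -- expressing √(n j² − 4) via √(d j)
    have hsqrtm : ∀ j, Real.sqrt (((n j) ^ 2 - 4 : ℕ)) = (f j : ℝ) * Real.sqrt (d j) := by
      intro j
      rw [← hdf j]
      push_cast
      rw [Real.sqrt_mul (by positivity) ((d j : ℝ)),
        show ((f j : ℝ)) ^ 2 = (f j : ℝ) * (f j : ℝ) by ring,
        Real.sqrt_mul_self (by positivity)]
    -- case A : q does not divide d j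
    have hpfQ : ∀ j, ¬ q ∣ d j → (d j).primeFactors ⊆ Q := by
      intro j hqd p hp
      refine Finset.mem_erase.mpr
        ⟨?_, Finset.mem_biUnion.mpr ⟨j, Finset.mem_univ _, hp⟩⟩
      rintro rfl
      exact hqd (Nat.dvd_of_mem_primeFactors hp)
    have hmemA : ∀ j, ¬ q ∣ d j → lamf (n j) ∈ FF Q ∧ (lamf (n j))⁻¹ ∈ FF Q := by
      intro j hqd
      have hsd : Real.sqrt (d j) ∈ FF Q := sqrt_squarefree_mem (hsf j) (hpfQ j hqd)
      constructor
      · rw [lamf, hsqrtm j]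
        exact half_mem (add_mem (natCast_mem _ _) (mul_mem (natCast_mem _ _) hsd))
      · rw [lamf_inv (hn j), hsqrtm j]
        exact half_mem (sub_mem (natCast_mem _ _) (mul_mem (natCast_mem _ _) hsd))
    -- case B : q divides d j
    have hmemB : ∀ j, q ∣ d j → ∃ B ∈ FF Q,
        lamf (n j) = (n j : ℝ)/2 + B * Real.sqrt q ∧
        (lamf (n j))⁻¹ = (n j : ℝ)/2 + (-B) * Real.sqrt q := by
      intro j hqd
      obtain ⟨c, hc⟩ := hqd
      have hcsf : Squarefree c := (hsf j).squarefree_of_dvd ⟨q, by rw [hc]; ring⟩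
      have hcpf : c.primeFactors ⊆ Q := by
        intro p hp
        have hpc : p ∣ c := Nat.dvd_of_mem_primeFactors hp
        have hpprime := Nat.prime_of_mem_primeFactors hp
        refine Finset.mem_erase.mpr ⟨?_, Finset.mem_biUnion.mpr
          ⟨j, Finset.mem_univ _, Nat.mem_primeFactors.mpr
            ⟨hpprime, hpc.trans ⟨q, by rw [hc]; ring⟩, (hd0 j).ne'⟩⟩⟩
        rintro rfl
        exact hpprime.not_isUnit (hsf j p (by rw [hc]; exact mul_dvd_mul_left p hpc))
      have hsc : Real.sqrt c ∈ FF Q := sqrt_squarefree_mem hcsf hcpf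
      have hsdj : Real.sqrt (d j) = Real.sqrt q * Real.sqrt c := by
        rw [hc]
        push_cast
        exact Real.sqrt_mul (by positivity) _
      refine ⟨(f j : ℝ) * Real.sqrt c / 2,
        half_mem (mul_mem (natCast_mem _ _) hsc), ?_, ?_⟩
      · rw [lamf, hsqrtm j, hsdj]; ring
      · rw [lamf_inv (hn j), hsqrtm j, hsdj]; ring
    -- membership of the units
    have hmemins : ∀ j, nuf (sign j) (n j) ∈ FF (insert q Q) := by
      intro j
      by_cases hqd : q ∣ d j
      · obtain ⟨B, hB, h1, h2⟩ := hmemB j hqd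
        have hhalf : (n j : ℝ)/2 ∈ FF Q := half_mem (natCast_mem _ _)
        rw [nuf]
        split
        · rw [h1]; exact mem_FF_insert.mpr ⟨_, _, hhalf, hB, rfl⟩
        · rw [h2]; exact mem_FF_insert.mpr ⟨_, _, hhalf, neg_mem hB, rfl⟩
      · obtain ⟨h1, h2⟩ := hmemA j hqd
        rw [nuf]
        split
        · exact FF_mono (Finset.subset_insert q Q) h1
        · exact FF_mono (Finset.subset_insert q Q) h2
    -- action of the conjugation on the units
    have hconjν : ∀ j, conjFF Q q (nuf (sign j) (n j))
        = if q ∣ d j then (nuf (sign j) (n j))⁻¹ else nuf (sign j) (n j) := by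
      intro j
      by_cases hqd : q ∣ d j
      · rw [if_pos hqd]
        obtain ⟨B, hB, h1, h2⟩ := hmemB j hqd
        have hhalf : (n j : ℝ)/2 ∈ FF Q := half_mem (natCast_mem _ _)
        rw [nuf]
        split
        · rw [h2, h1, conjFF_eq hsq hhalf hB]; ring
        · rw [inv_inv, h2, conjFF_eq hsq hhalf (neg_mem hB), h1]; ring
      · rw [if_neg hqd]
        obtain ⟨h1, h2⟩ := hmemA j hqd
        have : nuf (sign j) (n j) ∈ FF Q := by
          rw [nuf]; split; exacts [h1, h2]
        exact conjFF_fix hsq this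
    -- the vanishing subsum
    set S : Finset (Fin K) := Finset.univ.filter (fun j => q ∣ d j) with hS
    have hja : ja ∈ S := by rw [hS]; simp [hqa]
    have hSne : S.Nonempty := ⟨ja, hja⟩
    have hSneuniv : S ≠ Finset.univ := by
      intro h
      have : jb ∈ S := h ▸ Finset.mem_univ jb
      rw [hS, Finset.mem_filter] at this
      exact hqb this.2
    have hconjprod : conjFF Q q (∏ j, nuf (sign j) (n j))
        = ∏ j, conjFF Q q (nuf (sign j) (n j)) :=
      conjFF_prod hsq _ _ (fun j _ => hmemins j)
    rw [hprod, conjFF_one hsq] at hconjprod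
    have hsplit1 : ∏ j, conjFF Q q (nuf (sign j) (n j))
        = (∏ j ∈ S, (nuf (sign j) (n j))⁻¹)
          * ∏ j ∈ Finset.univ.filter (fun j => ¬ q ∣ d j), nuf (sign j) (n j) := by
      rw [← Finset.prod_filter_mul_prod_filter_not Finset.univ (fun j => q ∣ d j)]
      congr 1
      · refine Finset.prod_congr rfl fun j hj => ?_
        rw [hconjν j, if_pos (Finset.mem_filter.mp hj).2]
      · refine Finset.prod_congr rfl fun j hj => ?_
        rw [hconjν j, if_neg (Finset.mem_filter.mp hj).2]
    have hsplit2 : (∏ j ∈ S, nuf (sign j) (n j))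
        * ∏ j ∈ Finset.univ.filter (fun j => ¬ q ∣ d j), nuf (sign j) (n j) = 1 := by
      rw [hS, Finset.prod_filter_mul_prod_filter_not]
      exact hprod
    have hXpos : 0 < ∏ j ∈ S, nuf (sign j) (n j) :=
      Finset.prod_pos fun j _ => hνpos j
    have hYpos : 0 < ∏ j ∈ Finset.univ.filter (fun j => ¬ q ∣ d j), nuf (sign j) (n j) :=
      Finset.prod_pos fun j _ => hνpos j
    have hX1 : ∏ j ∈ S, nuf (sign j) (n j) = 1 := by
      have hinv : (∏ j ∈ S, nuf (sign j) (n j))⁻¹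
          * ∏ j ∈ Finset.univ.filter (fun j => ¬ q ∣ d j), nuf (sign j) (n j) = 1 := by
        rw [← Finset.prod_inv_distrib, ← hsplit1]
        exact hconjprod.symm
      set X := ∏ j ∈ S, nuf (sign j) (n j)
      set Y := ∏ j ∈ Finset.univ.filter (fun j => ¬ q ∣ d j), nuf (sign j) (n j)
      have hXY : X * Y = 1 := hsplit2
      have hXinv : X⁻¹ * Y = 1 := hinv
      have hYX : Y = X := (inv_injective (eq_inv_of_mul_eq_one_left hXinv)).symm
      have hXX : X * X = 1 := by rw [hYX] at hXY; exact hXY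
      rcases mul_self_eq_one_iff.mp hXX with h | h
      · exact h
      · linarith
    apply hnondeg S hSne hSneuniv
    have : ∑ j ∈ S, sign j * Real.log (Nnorm (n j))
        = 2 * ∑ j ∈ S, Real.log (nuf (sign j) (n j)) := by
      rw [Finset.mul_sum]
      refine Finset.sum_congr rfl fun j _ => ?_
      rw [hνlog j, log_Nnorm (hn j)]
      ring
    rw [this, ← Real.log_prod (fun j _ => (hνpos j).ne'), hX1, Real.log_one, mul_zero]
  -- conclusion
  by_cases hK : K = 0
  · subst hK
    exact ⟨1, fun _ => 1, fun j => j.elim0⟩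
  · have j0 : Fin K := ⟨0, Nat.pos_of_ne_zero hK⟩
    refine ⟨(d j0 : ℤ), fun j => (f j : ℤ), fun j => ⟨by show (0:ℤ) < (f j : ℤ); exact_mod_cast hf0 j, ?_⟩⟩
    have h4 : 4 ≤ (n j) ^ 2 := by have := hn j; nlinarith
    have h1 : (((f j) ^ 2 * d j : ℕ) : ℤ) = (n j : ℤ) ^ 2 - 4 := by
      rw [hdf j, Nat.cast_sub h4]
      push_cast
      ring
    rw [← h1, hdeq j j0]
    push_cast
    ring

end
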